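/- (Local convergence of the inexact successive quadratic approximation method.) Let f : ℝⁿ → ℝ be twice continuously differentiable with Hessian ∇²f Lipschitz continuous, let μ > 0, let x* satisfy F(x*) = 0 with ∇²f(x*) positive definite, and let τ > 0 satisfy τ < 1/‖∇²f(x*)‖. Consider an iteration in which x_{k+1} is computed by solving F_q(x_k; x_{k+1}) = r_k (with H = ∇²f(x_k)), where ‖r_k‖ ≤ η_k‖F(x_k)‖ and η_k ∈ [0,1). Then there exist a neighborhood N of x* and η̄ > 0 such that if η_k ≤ η̄ for all k and x₀ ∈ N, the sequence {x_k} converges Q-linearly to x*; if in addition η_k → 0, the convergence is Q-superlinear; and if there is η̃ > 0 with η_k ≤ η̃‖F(x_k)‖ for all k, the convergence is Q-quadratic. -/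

import Mathlib

open scoped RealInnerProductSpace

variable {n : ℕ}
local notation "E" => EuclideanSpace ℝ (Fin n)
local notation "CLM" => Matrix.toEuclideanCLM (𝕜 := ℝ)

noncomputable def clp (μ t : ℝ) : ℝ := max (-μ) (min μ t)

noncomputable def Pc (μ : ℝ) {n : ℕ} (u : EuclideanSpace ℝ (Fin n)) :
    EuclideanSpace ℝ (Fin n) := WithLp.toLp 2 (fun i => clp μ (u i))



theorem clp_firm (μ a b : ℝ) : (clp μ a - clp μ b)^2 ≤ (clp μ a - clp μ b) * (a - b) := by
  unfold clp
  simp only [max_def, min_def]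
  split_ifs <;> nlinarith [sq_nonneg (a-b)]

theorem clp_lip (μ a b : ℝ) : |clp μ a - clp μ b| ≤ |a - b| := by
  have h := clp_firm μ a b
  have h2 : (clp μ a - clp μ b) * (a - b) ≤ |clp μ a - clp μ b| * |a - b| := by
    rw [← abs_mul]; exact le_abs_self _
  rcases eq_or_lt_of_le (abs_nonneg (clp μ a - clp μ b)) with h4 | h4
  · rw [← h4]; exact abs_nonneg _
  · nlinarith [sq_abs (clp μ a - clp μ b)]


theorem Pc_firm (μ : ℝ) (u v : E) :
    ‖Pc μ u - Pc μ v‖^2 ≤ ⟪Pc μ u - Pc μ v, u - v⟫ := by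
  rw [← real_inner_self_eq_norm_sq]
  simp only [PiLp.inner_apply, RCLike.inner_apply, starRingEnd_apply, star_trivial]
  apply Finset.sum_le_sum
  intro i _
  have h1 : (Pc μ u - Pc μ v) i = clp μ (u i) - clp μ (v i) := by simp [Pc]
  have h2 : (u - v) i = u i - v i := by simp
  rw [h1, h2]
  have := clp_firm μ (u i) (v i)
  nlinarith [this]

theorem Pc_lip (μ : ℝ) (u v : E) : ‖Pc μ u - Pc μ v‖ ≤ ‖u - v‖ := by
  have h := Pc_firm μ u v
  have h2 := real_inner_le_norm (Pc μ u - Pc μ v) (u - v)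
  nlinarith [norm_nonneg (Pc μ u - Pc μ v), norm_nonneg (u - v)]


-- generalized Cauchy-Schwarz for PSD symmetric bilinear form
theorem psd_CS (H : E →L[ℝ] E) (hsym : ∀ u v : E, ⟪H u, v⟫ = ⟪H v, u⟫)
    (hpsd : ∀ d : E, 0 ≤ ⟪H d, d⟫) (u v : E) :
    ⟪H u, v⟫^2 ≤ ⟪H u, u⟫ * ⟪H v, v⟫ := by
  have hexp : ∀ t : ℝ, 0 ≤ ⟪H u, u⟫ + 2*t*⟪H u, v⟫ + t^2*⟪H v, v⟫ := by
    intro t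
    have h0 := hpsd (u + t • v)
    have : ⟪H (u + t • v), u + t • v⟫
        = ⟪H u, u⟫ + 2*t*⟪H u, v⟫ + t^2*⟪H v, v⟫ := by
      rw [map_add, map_smul]
      simp only [inner_add_left, inner_add_right, real_inner_smul_left, real_inner_smul_right]
      rw [hsym v u]; ring
    linarith [this ▸ h0]
  set P : ℝ := ⟪H u, v⟫ with hP
  set Q : ℝ := ⟪H u, u⟫ with hQ
  set R : ℝ := ⟪H v, v⟫ with hR
  rcases eq_or_ne R 0 with hv | hv
  · rcases eq_or_ne P 0 with huv | huv
    · rw [huv, hv]; nlinarith [hpsd u]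
    · exfalso
      have h1 := hexp ((-1 - Q) / (2 * P))
      rw [hv] at h1
      have hcalc : 2 * ((-1 - Q) / (2 * P)) * P = -1 - Q := by
        field_simp
      nlinarith [h1]
  · have hvpos : 0 < R := lt_of_le_of_ne (hpsd v) (Ne.symm hv)
    have h2 := hexp (-(P / R))
    have hcalc : Q + 2 * (-(P / R)) * P + (-(P / R))^2 * R = Q - P^2 / R := by
      field_simp; ring
    have key : 0 ≤ Q - P^2 / R := by linarith [hcalc ▸ h2]
    calc P^2 = P^2 / R * R := by field_simp
    _ ≤ Q * R := by nlinarith [key, hvpos]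

theorem Hsq_bound (H : E →L[ℝ] E) (hsym : ∀ u v : E, ⟪H u, v⟫ = ⟪H v, u⟫)
    (hpsd : ∀ d : E, 0 ≤ ⟪H d, d⟫) (d : E) :
    ‖H d‖^2 ≤ ‖H‖ * ⟪H d, d⟫ := by
  have h1 := psd_CS H hsym hpsd d (H d)
  have h2 : ⟪H (H d), H d⟫ ≤ ‖H‖ * ‖H d‖ * ‖H d‖ := by
    calc ⟪H (H d), H d⟫ ≤ ‖H (H d)‖ * ‖H d‖ := real_inner_le_norm _ _
    _ ≤ ‖H‖ * ‖H d‖ * ‖H d‖ := by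
        have := H.le_opNorm (H d)
        nlinarith [norm_nonneg (H d)]
  have h3 : ⟪H d, H d⟫ = ‖H d‖^2 := real_inner_self_eq_norm_sq _
  rcases eq_or_ne (‖H d‖) 0 with hz | hz
  · rw [hz]
    have := hpsd d
    have := norm_nonneg H
    nlinarith
  · have hpos : 0 < ‖H d‖ := lt_of_le_of_ne (norm_nonneg _) (Ne.symm hz)
    have h4 := mul_le_mul_of_nonneg_left h2 (hpsd d)
    nlinarith [hpsd d, h1, h3, h4, mul_pos hpos hpos, norm_nonneg H]

set_option maxHeartbeats 1000000 in
theorem key_mono (μ τ : ℝ) (hτ0 : 0 < τ) (H : E →L[ℝ] E)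
    (hsym : ∀ u v : E, ⟪H u, v⟫ = ⟪H v, u⟫)
    (lam : ℝ) (hco : ∀ d : E, lam * ‖d‖^2 ≤ ⟪H d, d⟫) (hlam : 0 ≤ lam)
    (hτH : τ * ‖H‖ ≤ 1) (w y y' : E) :
    3/4 * lam * ‖y - y'‖^2 ≤
      ⟪(w + H y - Pc μ (w + H y - τ⁻¹ • y)) - (w + H y' - Pc μ (w + H y' - τ⁻¹ • y')),
        y - y'⟫ := by
  set d := y - y' with hd
  set a := w + H y - τ⁻¹ • y with ha
  set b := w + H y' - τ⁻¹ • y' with hb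
  set c := Pc μ a - Pc μ b with hc
  have hpsd : ∀ e : E, 0 ≤ ⟪H e, e⟫ := fun e => le_trans (by positivity) (hco e)
  have hab : a - b = H d - τ⁻¹ • d := by
    rw [ha, hb, hd, map_sub, smul_sub]; abel
  have hG : (w + H y - Pc μ a) - (w + H y' - Pc μ b) = H d - c := by
    rw [hc, hd, map_sub]; abel
  rw [hG]
  have hfirm : ‖c‖^2 ≤ ⟪c, H d⟫ - τ⁻¹ * ⟪c, d⟫ := by
    have := Pc_firm μ a b
    rw [hab] at this
    rw [inner_sub_right, real_inner_smul_right] at this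
    linarith [this]
  have hcd : ⟪c, d⟫ ≤ τ * ⟪c, H d⟫ - τ * ‖c‖^2 := by
    have := mul_le_mul_of_nonneg_left hfirm hτ0.le
    have hne : τ * (τ⁻¹ * ⟪c, d⟫) = ⟪c, d⟫ := by field_simp
    nlinarith [this]
  have hCS : ⟪c, H d⟫ ≤ ‖c‖ * ‖H d‖ := real_inner_le_norm _ _
  have hHsq : ‖H d‖^2 ≤ ‖H‖ * ⟪H d, d⟫ := Hsq_bound H hsym hpsd d
  have hτHd : τ * ‖H d‖^2 ≤ ⟪H d, d⟫ := by
    have h1 : τ * ‖H d‖^2 ≤ τ * (‖H‖ * ⟪H d, d⟫) :=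
      mul_le_mul_of_nonneg_left hHsq hτ0.le
    have h2 : τ * ‖H‖ * ⟪H d, d⟫ ≤ 1 * ⟪H d, d⟫ :=
      mul_le_mul_of_nonneg_right hτH (hpsd d)
    nlinarith
  have hmain : ⟪H d - c, d⟫ = ⟪H d, d⟫ - ⟪c, d⟫ := by
    rw [inner_sub_left]
  rw [hmain]
  have hsq : 0 ≤ τ * (‖c‖ - ‖H d‖/2)^2 := by positivity
  have hfin : ⟪H d, d⟫ - ⟪c, d⟫ ≥ 3/4 * ⟪H d, d⟫ := by nlinarith
  have := hco d
  nlinarith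


-- Taylor bound
theorem aux_taylor (g : E → E) (Hess : E → Matrix (Fin n) (Fin n) ℝ)
    (hHess : ∀ y, HasFDerivAt g (CLM (Hess y)) y)
    (L1 : ℝ) (hL1 : ∀ a b : E, ‖CLM (Hess a) - CLM (Hess b)‖ ≤ L1 * ‖a - b‖)
    (hL1pos : 0 ≤ L1) (x y : E) :
    ‖g y - g x - CLM (Hess x) (y - x)‖ ≤ L1 * ‖y - x‖^2 := by
  set φ : E → E := fun z => g z - CLM (Hess x) z with hφ
  have hconv : Convex ℝ (Metric.closedBall x ‖y - x‖) := convex_closedBall _ _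
  have hder : ∀ z ∈ Metric.closedBall x ‖y - x‖,
      HasFDerivWithinAt φ (CLM (Hess z) - CLM (Hess x)) (Metric.closedBall x ‖y - x‖) z :=
    fun z _ => ((hHess z).sub ((CLM (Hess x)).hasFDerivAt)).hasFDerivWithinAt
  have hbd : ∀ z ∈ Metric.closedBall x ‖y - x‖, ‖CLM (Hess z) - CLM (Hess x)‖ ≤ L1 * ‖y - x‖ := by
    intro z hz
    rw [Metric.mem_closedBall, dist_eq_norm] at hz
    exact le_trans (hL1 z x) (mul_le_mul_of_nonneg_left hz hL1pos)
  have hxmem : x ∈ Metric.closedBall x ‖y - x‖ := Metric.mem_closedBall_self (norm_nonneg _)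
  have hymem : y ∈ Metric.closedBall x ‖y - x‖ := by
    rw [Metric.mem_closedBall, dist_eq_norm]
  have := hconv.norm_image_sub_le_of_norm_hasFDerivWithin_le hder hbd hxmem hymem
  have heq : φ y - φ x = g y - g x - CLM (Hess x) (y - x) := by
    rw [hφ]; simp only [map_sub]; abel
  rw [heq] at this
  calc ‖g y - g x - CLM (Hess x) (y - x)‖ ≤ L1 * ‖y - x‖ * ‖y - x‖ := this
  _ = L1 * ‖y - x‖^2 := by ring

-- Lipschitz bound for g on a ball around xstar
theorem aux_glip (g : E → E) (Hess : E → Matrix (Fin n) (Fin n) ℝ)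
    (hHess : ∀ y, HasFDerivAt g (CLM (Hess y)) y)
    (xstar : E) (M δ : ℝ) (hδ : 0 ≤ δ)
    (hM : ∀ z ∈ Metric.closedBall xstar δ, ‖CLM (Hess z)‖ ≤ M)
    (x : E) (hx : x ∈ Metric.closedBall xstar δ) :
    ‖g x - g xstar‖ ≤ M * ‖x - xstar‖ := by
  have hconv : Convex ℝ (Metric.closedBall xstar δ) := convex_closedBall _ _
  have hder : ∀ z ∈ Metric.closedBall xstar δ,
      HasFDerivWithinAt g (CLM (Hess z)) (Metric.closedBall xstar δ) z :=
    fun z _ => (hHess z).hasFDerivWithinAt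
  exact hconv.norm_image_sub_le_of_norm_hasFDerivWithin_le hder hM
    (Metric.mem_closedBall_self hδ) hx


theorem aux_coercive (A : Matrix (Fin n) (Fin n) ℝ) (h : A.PosDef) :
    ∃ lam : ℝ, 0 < lam ∧ ∀ d : E, lam * ‖d‖^2 ≤ ⟪CLM A d, d⟫ := by
  have hpos : ∀ d : E, d ≠ 0 → 0 < ⟪CLM A d, d⟫ := by
    intro d hd
    have h2 := h.dotProduct_mulVec_pos (x := WithLp.equiv _ _ d) (by simpa using hd)
    have hcd : ∀ i, CLM A d i = ∑ j, A i j * d j := fun i => rfl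
    simp only [PiLp.inner_apply, RCLike.inner_apply, starRingEnd_apply, star_trivial,
      dotProduct, Matrix.mulVec, hcd] at h2 ⊢
    calc (0:ℝ) < _ := h2
    _ = _ := by
        apply Finset.sum_congr rfl; intro i _
        simp [dotProduct]
  rcases subsingleton_or_nontrivial E with hs | hs
  · exact ⟨1, one_pos, fun d => by
      have : d = 0 := Subsingleton.elim _ _
      simp [this]⟩
  · have hS : IsCompact (Metric.sphere (0:E) 1) := isCompact_sphere 0 1
    have hne : (Metric.sphere (0:E) 1).Nonempty := NormedSpace.sphere_nonempty.2 zero_le_one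
    have hcont : Continuous fun d : E => ⟪CLM A d, d⟫ :=
      (Continuous.inner ((CLM A).continuous) continuous_id)
    obtain ⟨d0, hd0S, hmin⟩ := hS.exists_isMinOn hne (hcont.continuousOn)
    have hd0 : d0 ≠ 0 := by
      intro hz; rw [Metric.mem_sphere, dist_zero_right, hz] at hd0S; simp at hd0S
    refine ⟨⟪CLM A d0, d0⟫, hpos d0 hd0, fun d => ?_⟩
    rcases eq_or_ne d 0 with rfl | hd
    · simp
    · have hdn : (0:ℝ) < ‖d‖ := norm_pos_iff.2 hd
      have hu : (‖d‖⁻¹ • d) ∈ Metric.sphere (0:E) 1 := by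
        simp [norm_smul, abs_of_nonneg (le_of_lt (inv_pos.2 hdn)), inv_mul_cancel₀ hdn.ne']
      have := hmin hu
      have hexp : ⟪CLM A (‖d‖⁻¹ • d), ‖d‖⁻¹ • d⟫ = ‖d‖⁻¹ * ‖d‖⁻¹ * ⟪CLM A d, d⟫ := by
        rw [map_smul]
        rw [real_inner_smul_left, real_inner_smul_right]; ring
      rw [Set.mem_setOf_eq] at this  -- isMinOn unfolding?
      have h3 : ⟪CLM A d0, d0⟫ ≤ ‖d‖⁻¹ * ‖d‖⁻¹ * ⟪CLM A d, d⟫ := by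
        rw [← hexp]; exact this
      have h4 : ‖d‖^2 * ⟪CLM A d0, d0⟫ ≤ ⟪CLM A d, d⟫ := by
        have := mul_le_mul_of_nonneg_left h3 (le_of_lt (mul_pos hdn hdn))
        calc ‖d‖^2 * ⟪CLM A d0, d0⟫ = ‖d‖*‖d‖ * ⟪CLM A d0, d0⟫ := by ring
        _ ≤ ‖d‖*‖d‖ * (‖d‖⁻¹ * ‖d‖⁻¹ * ⟪CLM A d, d⟫) := this
        _ = ⟪CLM A d, d⟫ := by field_simp
      linarith [h4]


theorem aux_symm (f : E → ℝ) (g : E → E) (hg : ∀ y, HasGradientAt f (g y) y)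
    (H : E →L[ℝ] E) (x : E) (hH : HasFDerivAt g H x) (u v : E) :
    ⟪H u, v⟫ = ⟪H v, u⟫ := by
  have hf' : ∀ y, HasFDerivAt f ((InnerProductSpace.toDual ℝ E) (g y)) y := fun y =>
    (hg y).hasFDerivAt
  have hd : HasFDerivAt (fun y => (InnerProductSpace.toDual ℝ E) (g y))
      (((InnerProductSpace.toDual ℝ E).toLinearIsometry.toContinuousLinearMap).comp H) x := by
    exact ((InnerProductSpace.toDual ℝ E).toLinearIsometry.toContinuousLinearMap.hasFDerivAt).comp x hH
  have := second_derivative_symmetric hf' hd u v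
  simpa [InnerProductSpace.toDual] using this


set_option maxHeartbeats 1600000 in
theorem aux_step
    (g : E → E) (Hess : E → Matrix (Fin n) (Fin n) ℝ)
    (hHess : ∀ y, HasFDerivAt g (CLM (Hess y)) y)
    (L1 : ℝ) (hL1 : ∀ a b : E, ‖CLM (Hess a) - CLM (Hess b)‖ ≤ L1 * ‖a - b‖)
    (hL1one : 1 ≤ L1)
    (μ τ : ℝ) (hτ0 : 0 < τ)
    (F : E → E)
    (hF : ∀ y i, F y i = g y i - max (-μ) (min μ (g y i - y i / τ)))
    (Fq : E → E → E)
    (hFq : ∀ x y i, Fq x y i =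
      g x i + CLM (Hess x) (y - x) i -
        max (-μ) (min μ (g x i + CLM (Hess x) (y - x) i - y i / τ)))
    (xstar : E) (hstar : F xstar = 0)
    (hsym : ∀ x : E, ∀ u v : E, ⟪CLM (Hess x) u, v⟫ = ⟪CLM (Hess x) v, u⟫)
    (lam : ℝ) (hlam : 0 < lam)
    (hco : ∀ d : E, lam * ‖d‖^2 ≤ ⟪CLM (Hess xstar) d, d⟫)
    (δ : ℝ) (hδ0 : 0 < δ) (hδ1 : δ ≤ 1)
    (hδlam : L1 * δ ≤ lam/2)
    (hδτ : τ * (‖CLM (Hess xstar)‖ + L1 * δ) ≤ 1)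
    (x : E) (hx : ‖x - xstar‖ ≤ δ) :
    (∀ y : E, (3/8*lam) * ‖y - xstar‖ ≤ ‖Fq x y‖ + (2*L1) * ‖x - xstar‖^2)
    ∧ ‖F x‖ ≤ (2*(‖CLM (Hess xstar)‖ + L1) + τ⁻¹) * ‖x - xstar‖ := by
  have hL1pos : (0:ℝ) ≤ L1 := le_trans zero_le_one hL1one
  set Hx := CLM (Hess x) with hHx
  set Hs := CLM (Hess xstar) with hHs
  -- pointwise rewrites
  have hF_eq : ∀ z : E, F z = g z - Pc μ (g z - τ⁻¹ • z) := by
    intro z; ext i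
    simp only [PiLp.sub_apply, PiLp.smul_apply, Pc, PiLp.toLp_apply, clp, smul_eq_mul, hF z i]
    ring_nf
  have hFq_eq : ∀ y : E, Fq x y = ((g x - Hx x) + Hx y)
      - Pc μ (((g x - Hx x) + Hx y) - τ⁻¹ • y) := by
    intro y; ext i
    have h2 : Hx (y - x) i = Hx y i - Hx x i := by rw [map_sub]; simp
    simp only [PiLp.sub_apply, PiLp.add_apply, PiLp.smul_apply, Pc, PiLp.toLp_apply, clp, smul_eq_mul, hFq x y i]
    rw [h2]; ring_nf
  -- perturbation bounds
  have hHdiff : ‖Hx - Hs‖ ≤ L1 * δ := by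
    refine le_trans (hL1 x xstar) ?_
    exact mul_le_mul_of_nonneg_left hx hL1pos
  have hHxnorm : ‖Hx‖ ≤ ‖Hs‖ + L1 * δ := by
    calc ‖Hx‖ = ‖Hs + (Hx - Hs)‖ := by congr 1; abel
    _ ≤ ‖Hs‖ + ‖Hx - Hs‖ := norm_add_le _ _
    _ ≤ ‖Hs‖ + L1 * δ := by linarith
  have hτHx : τ * ‖Hx‖ ≤ 1 :=
    le_trans (mul_le_mul_of_nonneg_left hHxnorm hτ0.le) hδτ
  have hcox : ∀ d : E, lam/2 * ‖d‖^2 ≤ ⟪Hx d, d⟫ := by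
    intro d
    have h1 : ⟪Hs d, d⟫ - ⟪Hx d, d⟫ = ⟪(Hs - Hx) d, d⟫ := by
      rw [ContinuousLinearMap.sub_apply, inner_sub_left]
    have h2 : ⟪(Hs - Hx) d, d⟫ ≤ ‖Hs - Hx‖ * ‖d‖^2 := by
      calc ⟪(Hs - Hx) d, d⟫ ≤ ‖(Hs - Hx) d‖ * ‖d‖ := real_inner_le_norm _ _
      _ ≤ ‖Hs - Hx‖ * ‖d‖ * ‖d‖ := by
          have := (Hs - Hx).le_opNorm d
          nlinarith [norm_nonneg d]
      _ = ‖Hs - Hx‖ * ‖d‖^2 := by ring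
    have h3 : ‖Hs - Hx‖ ≤ L1 * δ := by rw [norm_sub_rev]; exact hHdiff
    have h4 := hco d
    nlinarith [sq_nonneg ‖d‖, h2, h3, h4, hδlam, norm_nonneg d]
  constructor
  · -- strong monotonicity estimate
    intro y
    set w := g x - Hx x with hw
    have hkm := key_mono μ τ hτ0 Hx (hsym x) (lam/2) hcox (by linarith) hτHx w y xstar
    rw [← hFq_eq y, ← hFq_eq xstar] at hkm
    -- ‖Fq x xstar‖ ≤ 2*L1*‖x-xstar‖^2
    have htay := aux_taylor g Hess hHess L1 hL1 hL1pos x xstar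
    have hFqstar : ‖Fq x xstar‖ ≤ 2*L1 * ‖x - xstar‖^2 := by
      have hFs0 : F xstar = g xstar - Pc μ (g xstar - τ⁻¹ • xstar) := hF_eq xstar
      have hzero : g xstar - Pc μ (g xstar - τ⁻¹ • xstar) = 0 := by rw [← hFs0, hstar]
      set u := (g x - Hx x) + Hx xstar with hu
      have hFqs : Fq x xstar = u - Pc μ (u - τ⁻¹ • xstar) := hFq_eq xstar
      have split : Fq x xstar = (u - g xstar)
          - (Pc μ (u - τ⁻¹ • xstar) - Pc μ (g xstar - τ⁻¹ • xstar)) := by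
        have hid : u - Pc μ (u - τ⁻¹ • xstar) = (u - g xstar)
            - (Pc μ (u - τ⁻¹ • xstar) - Pc μ (g xstar - τ⁻¹ • xstar))
            + (g xstar - Pc μ (g xstar - τ⁻¹ • xstar)) := by abel
        rw [hFqs, hid, hzero, add_zero]
      have hdiff : (u - τ⁻¹ • xstar) - (g xstar - τ⁻¹ • xstar) = u - g xstar := by abel
      have hpl := Pc_lip μ (u - τ⁻¹ • xstar) (g xstar - τ⁻¹ • xstar)
      rw [hdiff] at hpl
      have hnorm : ‖Fq x xstar‖ ≤ ‖u - g xstar‖ + ‖u - g xstar‖ := by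
        rw [split]
        exact le_trans (norm_sub_le _ _) (by linarith)
      have hug : ‖u - g xstar‖ ≤ L1 * ‖x - xstar‖^2 := by
        have : u - g xstar = -(g xstar - g x - Hx (xstar - x)) := by
          rw [hu, map_sub]; abel
        rw [this, norm_neg]
        calc ‖g xstar - g x - Hx (xstar - x)‖ ≤ L1 * ‖xstar - x‖^2 := htay
        _ = L1 * ‖x - xstar‖^2 := by rw [norm_sub_rev]
      linarith
    -- from monotonicity to norm bound
    have hub : ⟪Fq x y - Fq x xstar, y - xstar⟫ ≤ (‖Fq x y‖ + ‖Fq x xstar‖) * ‖y - xstar‖ := by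
      calc ⟪Fq x y - Fq x xstar, y - xstar⟫ ≤ ‖Fq x y - Fq x xstar‖ * ‖y - xstar‖ :=
        real_inner_le_norm _ _
      _ ≤ (‖Fq x y‖ + ‖Fq x xstar‖) * ‖y - xstar‖ :=
        mul_le_mul_of_nonneg_right (norm_sub_le _ _) (norm_nonneg _)
    have hchain : 3/4 * (lam/2) * ‖y - xstar‖^2 ≤ (‖Fq x y‖ + ‖Fq x xstar‖) * ‖y - xstar‖ :=
      le_trans hkm hub
    rcases eq_or_ne (‖y - xstar‖) 0 with hz | hz
    · rw [hz]
      have : (0:ℝ) ≤ ‖Fq x y‖ + 2*L1*‖x - xstar‖^2 := by positivity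
      linarith
    · have hpos : 0 < ‖y - xstar‖ := lt_of_le_of_ne (norm_nonneg _) (Ne.symm hz)
      have h5 : 3/8 * lam * ‖y - xstar‖ ≤ ‖Fq x y‖ + ‖Fq x xstar‖ := by
        nlinarith [hchain, hpos]
      linarith [hFqstar]
  · -- F Lipschitz bound
    have hMz : ∀ z ∈ Metric.closedBall xstar δ, ‖CLM (Hess z)‖ ≤ ‖Hs‖ + L1 := by
      intro z hz
      rw [Metric.mem_closedBall, dist_eq_norm] at hz
      have h1 : ‖CLM (Hess z) - Hs‖ ≤ L1 * δ := by
        refine le_trans (hL1 z xstar) (mul_le_mul_of_nonneg_left hz hL1pos)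
      have h2 : L1 * δ ≤ L1 := by nlinarith
      calc ‖CLM (Hess z)‖ = ‖Hs + (CLM (Hess z) - Hs)‖ := by congr 1; abel
      _ ≤ ‖Hs‖ + ‖CLM (Hess z) - Hs‖ := norm_add_le _ _
      _ ≤ ‖Hs‖ + L1 := by linarith
    have hgl := aux_glip g Hess hHess xstar (‖Hs‖ + L1) δ hδ0.le hMz x
      (by rw [Metric.mem_closedBall, dist_eq_norm]; exact hx)
    have hFx : F x = g x - Pc μ (g x - τ⁻¹ • x) := hF_eq x
    have hFs : F xstar = g xstar - Pc μ (g xstar - τ⁻¹ • xstar) := hF_eq xstar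
    have split : F x = (g x - g xstar)
        - (Pc μ (g x - τ⁻¹ • x) - Pc μ (g xstar - τ⁻¹ • xstar)) := by
      rw [hFx]
      have hzero : g xstar - Pc μ (g xstar - τ⁻¹ • xstar) = 0 := by rw [← hFs, hstar]
      rw [sub_eq_zero] at hzero
      rw [← hzero]; abel
    have hpl := Pc_lip μ (g x - τ⁻¹ • x) (g xstar - τ⁻¹ • xstar)
    have hdiff : ‖(g x - τ⁻¹ • x) - (g xstar - τ⁻¹ • xstar)‖
        ≤ ‖g x - g xstar‖ + τ⁻¹ * ‖x - xstar‖ := by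
      have heq : (g x - τ⁻¹ • x) - (g xstar - τ⁻¹ • xstar)
          = (g x - g xstar) - τ⁻¹ • (x - xstar) := by rw [smul_sub]; abel
      rw [heq]
      refine le_trans (norm_sub_le _ _) ?_
      rw [norm_smul]
      simp only [norm_inv, Real.norm_eq_abs, abs_of_pos hτ0]
      linarith [le_refl (‖g x - g xstar‖ + τ⁻¹ * ‖x - xstar‖)]
    have : ‖F x‖ ≤ ‖g x - g xstar‖ + (‖g x - g xstar‖ + τ⁻¹ * ‖x - xstar‖) := by
      rw [split]
      exact le_trans (norm_sub_le _ _) (by linarith)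
    have hτinv : (0:ℝ) < τ⁻¹ := inv_pos.2 hτ0
    nlinarith [hgl, this, norm_nonneg (x - xstar)]


set_option maxHeartbeats 1600000 in
/-- local convergence of the inexact successive quadratic
approximation method: Q-linear for `η_k ≤ η̄`, Q-superlinear if `η_k → 0`,
and Q-quadratic if `η_k ≤ η̃‖F(x_k)‖`. -/
theorem stmt_14
    (f : E → ℝ) (hf : ContDiff ℝ 2 f)
    (g : E → E) (hg : ∀ y, HasGradientAt f (g y) y)
    (Hess : E → Matrix (Fin n) (Fin n) ℝ)
    (hHess : ∀ y, HasFDerivAt g (CLM (Hess y)) y)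
    (L : ℝ) (hL : ∀ a b : E, ‖CLM (Hess a) - CLM (Hess b)‖ ≤ L * ‖a - b‖)
    (μ τ : ℝ) (hμ : 0 < μ) (hτ0 : 0 < τ)
    (F : E → E)
    (hF : ∀ y i, F y i = g y i - max (-μ) (min μ (g y i - y i / τ)))
    (xstar : E) (hstar : F xstar = 0)
    (hpd : (Hess xstar).PosDef)
    (hτ : τ < 1 / ‖CLM (Hess xstar)‖)
    (Fq : E → E → E)
    (hFq : ∀ x y i, Fq x y i =
      g x i + CLM (Hess x) (y - x) i -
        max (-μ) (min μ (g x i + CLM (Hess x) (y - x) i - y i / τ))) :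
    ∃ N ∈ nhds xstar, ∃ ηbar : ℝ, 0 < ηbar ∧
      ∀ (xs : ℕ → E) (r : ℕ → E) (η : ℕ → ℝ),
        (∀ k, 0 ≤ η k) → (∀ k, η k < 1) →
        (∀ k, Fq (xs k) (xs (k + 1)) = r k) →
        (∀ k, ‖r k‖ ≤ η k * ‖F (xs k)‖) →
        xs 0 ∈ N →
        ((∀ k, η k ≤ ηbar) →
          (Filter.Tendsto xs Filter.atTop (nhds xstar) ∧
           ∃ c : ℝ, 0 < c ∧ c < 1 ∧
             ∀ᶠ k in Filter.atTop, ‖xs (k + 1) - xstar‖ ≤ c * ‖xs k - xstar‖)) ∧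
        ((∀ k, η k ≤ ηbar) → Filter.Tendsto η Filter.atTop (nhds 0) →
          (Filter.Tendsto xs Filter.atTop (nhds xstar) ∧
           Filter.Tendsto (fun k => ‖xs (k + 1) - xstar‖ / ‖xs k - xstar‖)
             Filter.atTop (nhds 0))) ∧
        ((∀ k, η k ≤ ηbar) →
          ∀ ηtil : ℝ, 0 < ηtil → (∀ k, η k ≤ ηtil * ‖F (xs k)‖) →
          (Filter.Tendsto xs Filter.atTop (nhds xstar) ∧
           ∃ C : ℝ, ∀ᶠ k in Filter.atTop,
             ‖xs (k + 1) - xstar‖ ≤ C * ‖xs k - xstar‖ ^ 2)) := by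
  classical
  -- positivity of the Hessian norm at xstar
  have hρpos : 0 < ‖CLM (Hess xstar)‖ := by
    rcases eq_or_lt_of_le (norm_nonneg (CLM (Hess xstar))) with h0 | h0
    · exfalso; rw [← h0] at hτ; simp at hτ; linarith
    · exact h0
  have hτρ : τ * ‖CLM (Hess xstar)‖ < 1 := by
    rw [div_eq_inv_mul, mul_one] at hτ
    calc τ * ‖CLM (Hess xstar)‖ < ‖CLM (Hess xstar)‖⁻¹ * ‖CLM (Hess xstar)‖ :=
      mul_lt_mul_of_pos_right hτ hρpos
    _ = 1 := inv_mul_cancel₀ hρpos.ne'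
  set L1 : ℝ := max L 1 with hL1def
  have hL1one : 1 ≤ L1 := le_max_right _ _
  have hL1pos : 0 < L1 := lt_of_lt_of_le one_pos hL1one
  have hL1 : ∀ a b : E, ‖CLM (Hess a) - CLM (Hess b)‖ ≤ L1 * ‖a - b‖ := fun a b =>
    le_trans (hL a b) (mul_le_mul_of_nonneg_right (le_max_left _ _) (norm_nonneg _))
  obtain ⟨lam, hlam, hco⟩ := aux_coercive (Hess xstar) hpd
  have hsym : ∀ x : E, ∀ u v : E, ⟪CLM (Hess x) u, v⟫ = ⟪CLM (Hess x) v, u⟫ :=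
    fun x => aux_symm f g hg _ x (hHess x)
  set ρ : ℝ := ‖CLM (Hess xstar)‖ with hρdef
  set γ : ℝ := 3/8*lam with hγdef
  set C0 : ℝ := 2*L1 with hC0def
  set K : ℝ := 2*(ρ + L1) + τ⁻¹ with hKdef
  have hγpos : 0 < γ := by rw [hγdef]; linarith
  have hC0pos : 0 < C0 := by rw [hC0def]; linarith
  have hKpos : 0 < K := by
    have : (0:ℝ) < τ⁻¹ := inv_pos.2 hτ0
    rw [hKdef]; nlinarith [hρpos, hL1pos]
  set δ : ℝ := min 1 (min (lam/(2*L1)) (min ((1 - τ*ρ)/(2*τ*L1)) (γ/(4*C0)))) with hδdef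
  have hδ0 : 0 < δ := by
    rw [hδdef]
    refine lt_min one_pos (lt_min (by positivity) (lt_min ?_ (by positivity)))
    have : 0 < 1 - τ*ρ := by linarith
    positivity
  have hδ1 : δ ≤ 1 := min_le_left _ _
  have hδlam : L1 * δ ≤ lam/2 := by
    have h1 : δ ≤ lam/(2*L1) := le_trans (min_le_right _ _) (min_le_left _ _)
    have := mul_le_mul_of_nonneg_left h1 hL1pos.le
    calc L1 * δ ≤ L1 * (lam/(2*L1)) := this
    _ = lam/2 := by field_simp
  have hδτ : τ * (ρ + L1 * δ) ≤ 1 := by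
    have h1 : δ ≤ (1 - τ*ρ)/(2*τ*L1) :=
      le_trans (min_le_right _ _) (le_trans (min_le_right _ _) (min_le_left _ _))
    have h2 : L1 * δ ≤ (1 - τ*ρ)/(2*τ) := by
      have := mul_le_mul_of_nonneg_left h1 hL1pos.le
      calc L1 * δ ≤ L1 * ((1 - τ*ρ)/(2*τ*L1)) := this
      _ = (1 - τ*ρ)/(2*τ) := by field_simp
    have h3 : τ * (L1 * δ) ≤ (1 - τ*ρ)/2 := by
      have := mul_le_mul_of_nonneg_left h2 hτ0.le
      calc τ * (L1*δ) ≤ τ * ((1 - τ*ρ)/(2*τ)) := this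
      _ = (1 - τ*ρ)/2 := by field_simp
    nlinarith
  have hδC0 : C0 * δ ≤ γ/4 := by
    have h1 : δ ≤ γ/(4*C0) :=
      le_trans (min_le_right _ _) (le_trans (min_le_right _ _) (min_le_right _ _))
    have := mul_le_mul_of_nonneg_left h1 hC0pos.le
    calc C0 * δ ≤ C0 * (γ/(4*C0)) := this
    _ = γ/4 := by field_simp
  have h4K : (0:ℝ) < 4*K := by linarith
  rw [hρdef] at hδτ
  clear_value L1 ρ γ C0 K δ
  refine ⟨Metric.closedBall xstar δ, Metric.closedBall_mem_nhds _ hδ0,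
    γ/(4*K), div_pos hγpos h4K, ?_⟩
  intro xs r η hη0 hη1 hFqr hrle hx0
  have ha0 : ‖xs 0 - xstar‖ ≤ δ := by
    rw [Metric.mem_closedBall, dist_eq_norm] at hx0
    exact hx0
  have hanneg : ∀ k, (0:ℝ) ≤ ‖xs k - xstar‖ := fun k => norm_nonneg _
  have hstep := fun (x : E) (hx : ‖x - xstar‖ ≤ δ) =>
    aux_step g Hess hHess L1 hL1 hL1one μ τ hτ0 F hF Fq hFq xstar hstar hsym
      lam hlam hco δ hδ0 hδ1 hδlam hδτ x hx
  -- hstep in terms of γ, C0, K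
  have hstep1 : ∀ x : E, ‖x - xstar‖ ≤ δ → ∀ y : E,
      γ * ‖y - xstar‖ ≤ ‖Fq x y‖ + C0 * ‖x - xstar‖^2 := by
    intro x hx y
    have := (hstep x hx).1 y
    rw [hγdef, hC0def]; exact this
  have hstep2 : ∀ x : E, ‖x - xstar‖ ≤ δ → ‖F x‖ ≤ K * ‖x - xstar‖ := by
    intro x hx
    have := (hstep x hx).2
    rw [hKdef, hρdef]; exact this
  clear hstep
  -- master facts under the assumption η ≤ ηbar
  have master : (∀ k, η k ≤ γ/(4*K)) →
      (∀ k, ‖xs k - xstar‖ ≤ δ) ∧ (∀ k, ‖xs (k+1) - xstar‖ ≤ ‖xs k - xstar‖ / 2)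
      ∧ (∀ k, γ * ‖xs (k+1) - xstar‖ ≤ η k * (K * ‖xs k - xstar‖) + C0 * ‖xs k - xstar‖^2)
      ∧ Filter.Tendsto xs Filter.atTop (nhds xstar)
      ∧ Filter.Tendsto (fun k => ‖xs k - xstar‖) Filter.atTop (nhds 0) := by
    intro hbar
    have hγa : ∀ k, ‖xs k - xstar‖ ≤ δ →
        γ * ‖xs (k+1) - xstar‖ ≤ η k * (K * ‖xs k - xstar‖) + C0 * ‖xs k - xstar‖^2 := by
      intro k hk
      have h3 := hstep1 (xs k) hk (xs (k+1))
      rw [hFqr k] at h3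
      have h4 : ‖r k‖ ≤ η k * (K * ‖xs k - xstar‖) := by
        refine le_trans (hrle k) ?_
        exact mul_le_mul_of_nonneg_left (hstep2 (xs k) hk) (hη0 k)
      linarith
    have hhalf : ∀ k, ‖xs k - xstar‖ ≤ δ → ‖xs (k+1) - xstar‖ ≤ ‖xs k - xstar‖ / 2 := by
      intro k hk
      have h1 := hγa k hk
      have h5 : η k * (K * ‖xs k - xstar‖) ≤ γ/(4*K) * (K * ‖xs k - xstar‖) := by
        refine mul_le_mul_of_nonneg_right (hbar k) ?_
        exact mul_nonneg hKpos.le (hanneg k)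
      have h6 : γ/(4*K) * (K * ‖xs k - xstar‖) = γ/4 * ‖xs k - xstar‖ := by
        field_simp
      have h7 : C0 * ‖xs k - xstar‖^2 ≤ γ/4 * ‖xs k - xstar‖ := by
        have : C0 * ‖xs k - xstar‖ ≤ γ/4 :=
          le_trans (mul_le_mul_of_nonneg_left hk hC0pos.le) hδC0
        nlinarith [hanneg k]
      have h9 : γ * ‖xs (k+1) - xstar‖ ≤ γ/4 * ‖xs k - xstar‖ + γ/4 * ‖xs k - xstar‖ := by
        rw [h6] at h5; linarith only [h1, h5, h7]
      have h10 : ‖xs (k+1) - xstar‖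
          ≤ (γ/4 * ‖xs k - xstar‖ + γ/4 * ‖xs k - xstar‖)/γ := by
        rw [le_div_iff₀ hγpos]; linarith only [h9]
      have h11 : (γ/4 * ‖xs k - xstar‖ + γ/4 * ‖xs k - xstar‖)/γ = ‖xs k - xstar‖ / 2 := by
        field_simp; ring
      linarith [h10, h11.ge, h11.le]
    have hinv : ∀ k, ‖xs k - xstar‖ ≤ δ ∧ ‖xs (k+1) - xstar‖ ≤ ‖xs k - xstar‖ / 2 := by
      intro k
      induction k with
      | zero => exact ⟨ha0, hhalf 0 ha0⟩
      | succ m ih =>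
          have h1 : ‖xs (m+1) - xstar‖ ≤ δ := by linarith [ih.1, ih.2, hδ0, hanneg m]
          exact ⟨h1, hhalf (m+1) h1⟩
    have hgeo : ∀ k, ‖xs k - xstar‖ ≤ (1/2)^k * ‖xs 0 - xstar‖ := by
      intro k
      induction k with
      | zero => simp
      | succ m ih =>
          calc ‖xs (m+1) - xstar‖ ≤ ‖xs m - xstar‖ / 2 := (hinv m).2
          _ ≤ ((1/2)^m * ‖xs 0 - xstar‖) / 2 := by linarith
          _ = (1/2)^(m+1) * ‖xs 0 - xstar‖ := by ring
    have htend0 : Filter.Tendsto (fun k => ‖xs k - xstar‖) Filter.atTop (nhds 0) := by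
      have hpow : Filter.Tendsto (fun k : ℕ => (1/2:ℝ)^k * ‖xs 0 - xstar‖)
          Filter.atTop (nhds 0) := by
        have := (tendsto_pow_atTop_nhds_zero_of_lt_one (by norm_num : (0:ℝ) ≤ 1/2)
          (by norm_num : (1/2:ℝ) < 1)).mul_const (‖xs 0 - xstar‖)
        simpa using this
      exact squeeze_zero hanneg hgeo hpow
    have hxs : Filter.Tendsto xs Filter.atTop (nhds xstar) := by
      rw [tendsto_iff_dist_tendsto_zero]
      simpa [dist_eq_norm] using htend0
    exact ⟨fun k => (hinv k).1, fun k => (hinv k).2, fun k => hγa k (hinv k).1, hxs, htend0⟩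
  refine ⟨?_, ?_, ?_⟩
  · intro hbar
    obtain ⟨hball, hhalf, hγa, hxs, htend0⟩ := master hbar
    exact ⟨hxs, 1/2, by norm_num, by norm_num,
      Filter.Eventually.of_forall (fun k => by
        have h := hhalf k; linarith)⟩
  · intro hbar hηtend
    obtain ⟨hball, hhalf, hγa, hxs, htend0⟩ := master hbar
    refine ⟨hxs, ?_⟩
    have hratio : ∀ k, ‖xs (k+1) - xstar‖ / ‖xs k - xstar‖
        ≤ (K * η k + C0 * ‖xs k - xstar‖) / γ := by
      intro k
      rcases eq_or_lt_of_le (hanneg k) with hz | hz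
      · have hxk : xs k = xstar := by
          have h0 : ‖xs k - xstar‖ = 0 := hz.symm
          rwa [norm_sub_eq_zero_iff] at h0
        have hFz : ‖F (xs k)‖ = 0 := by rw [hxk, hstar, norm_zero]
        have hr0 : ‖r k‖ ≤ 0 := by
          have := hrle k; rw [hFz, mul_zero] at this; exact this
        have h1 := hstep1 (xs k) (hball k) (xs (k+1))
        rw [hFqr k] at h1
        have ha1 : ‖xs (k+1) - xstar‖ = 0 := by
          have h2 : γ * ‖xs (k+1) - xstar‖ ≤ ‖r k‖ + C0 * ‖xs k - xstar‖^2 := h1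
          rw [← hz] at h2
          have h3 : γ * ‖xs (k+1) - xstar‖ ≤ 0 := by
            simpa using le_trans h2 (by nlinarith)
          nlinarith [hanneg (k+1), hγpos]
        rw [ha1, ← hz]
        rw [zero_div]
        apply div_nonneg _ hγpos.le
        nlinarith [hη0 k, hanneg k, hKpos, hC0pos]
      · have h1 := hγa k
        rw [div_le_div_iff₀ hz hγpos]
        nlinarith [h1]
    have hbig : Filter.Tendsto (fun k => (K * η k + C0 * ‖xs k - xstar‖) / γ)
        Filter.atTop (nhds 0) := by
      have h1 : Filter.Tendsto (fun k => K * η k + C0 * ‖xs k - xstar‖)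
          Filter.atTop (nhds 0) := by
        have h2 := (hηtend.const_mul K).add (htend0.const_mul C0)
        simpa using h2
      simpa using h1.div_const γ
    exact squeeze_zero (fun k => div_nonneg (hanneg (k+1)) (hanneg k)) hratio hbig
  · intro hbar ηtil hηtil hηle
    obtain ⟨hball, hhalf, hγa, hxs, htend0⟩ := master hbar
    refine ⟨hxs, (ηtil * K^2 + C0)/γ, Filter.Eventually.of_forall (fun k => ?_)⟩
    have h1 := hγa k
    have h2 := hstep2 (xs k) (hball k)
    have h3 : η k ≤ ηtil * (K * ‖xs k - xstar‖) := by
      refine le_trans (hηle k) ?_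
      exact mul_le_mul_of_nonneg_left h2 hηtil.le
    have h4 : η k * (K * ‖xs k - xstar‖) ≤ ηtil * K^2 * ‖xs k - xstar‖^2 := by
      have hKa : 0 ≤ K * ‖xs k - xstar‖ := mul_nonneg hKpos.le (hanneg k)
      calc η k * (K * ‖xs k - xstar‖)
          ≤ (ηtil * (K * ‖xs k - xstar‖)) * (K * ‖xs k - xstar‖) :=
        mul_le_mul_of_nonneg_right h3 hKa
      _ = ηtil * K^2 * ‖xs k - xstar‖^2 := by ring
    have h5 : γ * ‖xs (k+1) - xstar‖ ≤ (ηtil * K^2 + C0) * ‖xs k - xstar‖^2 := by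
      nlinarith [h1]
    have h6 : ‖xs (k+1) - xstar‖ ≤ ((ηtil * K^2 + C0) * ‖xs k - xstar‖^2)/γ := by
      rw [le_div_iff₀ hγpos]; linarith
    calc ‖xs (k+1) - xstar‖ ≤ ((ηtil * K^2 + C0) * ‖xs k - xstar‖^2)/γ := h6
    _ = (ηtil * K^2 + C0)/γ * ‖xs k - xstar‖^2 := by ring
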